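/- With notation as in the quantum-classical correspondence, the Fourier coefficients of f_H satisfy f̂_H(s) = Ĥ_s · 3^{−|s|/2} for every s ∈ {I,X,Y,Z}ⁿ, where |s| = |{i : s_i ≠ I}| and s is identified with a subset of [2n] via I ↦ ∅, X ↦ {first coordinate of block}, Z ↦ {second coordinate}, Y ↦ {both coordinates}. -/

import Mathlib

noncomputable section
open Complex Matrix
open scoped Classical

/-- Pauli X matrix. -/
def σX : Matrix (Fin 2) (Fin 2) ℂ := !![0, 1; 1, 0]
/-- Pauli Y matrix. -/
def σY : Matrix (Fin 2) (Fin 2) ℂ := !![0, -I; I, 0]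
/-- Pauli Z matrix. -/
def σZ : Matrix (Fin 2) (Fin 2) ℂ := !![1, 0; 0, -1]

/-- The four Pauli matrices I, X, Y, Z. -/
def pauli : Fin 4 → Matrix (Fin 2) (Fin 2) ℂ := ![1, σX, σY, σZ]

/-- The n-qubit Pauli string s₁ ⊗ s₂ ⊗ ⋯ ⊗ sₙ, as a matrix indexed by Fin n → Fin 2. -/
def pauliString {n : ℕ} (s : Fin n → Fin 4) :
    Matrix (Fin n → Fin 2) (Fin n → Fin 2) ℂ :=
  fun v w => ∏ i, pauli (s i) (v i) (w i)

/-- The Hamiltonian H = Σ_s Ĥ_s s₁⊗⋯⊗sₙ with real Pauli coefficients Ĥ. -/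
def hamOf {n : ℕ} (Hhat : (Fin n → Fin 4) → ℝ) :
    Matrix (Fin n → Fin 2) (Fin n → Fin 2) ℂ :=
  ∑ s : Fin n → Fin 4, (Hhat s : ℂ) • pauliString s

/-- The weight |s| of a Pauli string: the number of non-identity tensor factors. -/
def weight {n : ℕ} (s : Fin n → Fin 4) : ℕ :=
  (Finset.univ.filter (fun i => s i ≠ 0)).card

/-- The product state ψ₁ ⊗ ⋯ ⊗ ψₙ. -/
def prodState {n : ℕ} (ψ : Fin n → Fin 2 → ℂ) : (Fin n → Fin 2) → ℂ :=
  fun v => ∏ i, ψ i (v i)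

/-- Expectation value ⟨Ψ|M|Ψ⟩ for an n-qubit operator. -/
def expValN {n : ℕ} (M : Matrix (Fin n → Fin 2) (Fin n → Fin 2) ℂ)
    (Ψ : (Fin n → Fin 2) → ℂ) : ℂ :=
  ∑ v, ∑ w, (starRingEnd ℂ) (Ψ v) * M v w * Ψ w

/-- The state |ψ₊₊⟩ = (√(3+√3)|0⟩ + e^{iπ/4}√(3-√3)|1⟩)/√6. -/
def ψpp : Fin 2 → ℂ :=
  ![(Real.sqrt (3 + Real.sqrt 3) : ℂ) / (Real.sqrt 6 : ℂ),
    Complex.exp (Real.pi * I / 4) * (Real.sqrt (3 - Real.sqrt 3) : ℂ) / (Real.sqrt 6 : ℂ)]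

/-- Pauli correction selecting a tetrahedron state: (+,+)↦I, (−,+)↦Z, (+,−)↦X, (−,−)↦Y. -/
def tetraM (a b : ℝ) : Matrix (Fin 2) (Fin 2) ℂ :=
  if a = 1 then (if b = 1 then 1 else σX) else (if b = 1 then σZ else σY)

/-- The tetrahedron state labelled by (a,b) ∈ {±1}². -/
def tetra (a b : ℝ) : Fin 2 → ℂ := (tetraM a b).mulVec ψpp

def expVal1 (M : Matrix (Fin 2) (Fin 2) ℂ) (ψ : Fin 2 → ℂ) : ℂ :=
  ∑ v, ∑ w, (starRingEnd ℂ) (ψ v) * M v w * ψ w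

lemma psi0 : ψpp 0 = ((Real.sqrt (3 + Real.sqrt 3) / Real.sqrt 6 : ℝ) : ℂ) := by
  simp [ψpp]
lemma psi1 : ψpp 1 = ((Real.sqrt 2 * Real.sqrt (3 - Real.sqrt 3) / (2 * Real.sqrt 6) : ℝ) : ℂ) * (1 + I) := by
  have h : (Real.pi : ℂ) * I / 4 = ((Real.pi / 4 : ℝ) : ℂ) * I := by push_cast; ring
  simp only [ψpp, Matrix.cons_val_one, Matrix.head_cons]
  rw [h, Complex.exp_mul_I, ← Complex.ofReal_cos, ← Complex.ofReal_sin,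
    Real.cos_pi_div_four, Real.sin_pi_div_four]
  push_cast; ring

-- real facts
lemma f1R : (Real.sqrt (3 + Real.sqrt 3) / Real.sqrt 6) ^ 2
    + 2 * (Real.sqrt 2 * Real.sqrt (3 - Real.sqrt 3) / (2 * Real.sqrt 6)) ^ 2 = 1 := by
  have hs3 : Real.sqrt 3 ^ 2 = 3 := Real.sq_sqrt (by norm_num)
  have h3nn : (0:ℝ) ≤ Real.sqrt 3 := Real.sqrt_nonneg 3
  have h3le : Real.sqrt 3 ≤ 3 := by nlinarith
  have hp : Real.sqrt (3 + Real.sqrt 3) ^ 2 = 3 + Real.sqrt 3 := Real.sq_sqrt (by positivity)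
  have hq : Real.sqrt (3 - Real.sqrt 3) ^ 2 = 3 - Real.sqrt 3 := Real.sq_sqrt (by linarith)
  have hs2 : Real.sqrt 2 ^ 2 = 2 := Real.sq_sqrt (by norm_num)
  have hs6 : Real.sqrt 6 ^ 2 = 6 := Real.sq_sqrt (by norm_num)
  have h6pos : (0:ℝ) < Real.sqrt 6 := Real.sqrt_pos.2 (by norm_num)
  field_simp
  nlinarith [hp, hq, hs2, hs6]

lemma f2R : 2 * (Real.sqrt (3 + Real.sqrt 3) / Real.sqrt 6)
    * (Real.sqrt 2 * Real.sqrt (3 - Real.sqrt 3) / (2 * Real.sqrt 6)) = (Real.sqrt 3)⁻¹ := by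
  have hs3 : Real.sqrt 3 ^ 2 = 3 := Real.sq_sqrt (by norm_num)
  have h3nn : (0:ℝ) ≤ Real.sqrt 3 := Real.sqrt_nonneg 3
  have hpq : Real.sqrt (3 + Real.sqrt 3) * Real.sqrt (3 - Real.sqrt 3) = Real.sqrt 6 := by
    rw [← Real.sqrt_mul (by positivity)]
    congr 1; nlinarith
  have h26 : Real.sqrt 2 * Real.sqrt 6 = 2 * Real.sqrt 3 := by
    rw [← Real.sqrt_mul (by norm_num)]
    rw [show (2:ℝ) * 6 = 2^2 * 3 by norm_num, Real.sqrt_mul (by positivity),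
      Real.sqrt_sq (by norm_num)]
  have hs6 : Real.sqrt 6 ^ 2 = 6 := Real.sq_sqrt (by norm_num)
  have h6pos : (0:ℝ) < Real.sqrt 6 := Real.sqrt_pos.2 (by norm_num)
  have h3pos : (0:ℝ) < Real.sqrt 3 := Real.sqrt_pos.2 (by norm_num)
  field_simp
  linear_combination Real.sqrt 3*Real.sqrt 2*hpq + Real.sqrt 3*h26 + 2*hs3 - hs6

lemma f3R : (Real.sqrt (3 + Real.sqrt 3) / Real.sqrt 6) ^ 2
    - 2 * (Real.sqrt 2 * Real.sqrt (3 - Real.sqrt 3) / (2 * Real.sqrt 6)) ^ 2 = (Real.sqrt 3)⁻¹ := by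
  have hs3 : Real.sqrt 3 ^ 2 = 3 := Real.sq_sqrt (by norm_num)
  have h3nn : (0:ℝ) ≤ Real.sqrt 3 := Real.sqrt_nonneg 3
  have h3le : Real.sqrt 3 ≤ 3 := by nlinarith
  have hp : Real.sqrt (3 + Real.sqrt 3) ^ 2 = 3 + Real.sqrt 3 := Real.sq_sqrt (by positivity)
  have hq : Real.sqrt (3 - Real.sqrt 3) ^ 2 = 3 - Real.sqrt 3 := Real.sq_sqrt (by linarith)
  have hs2 : Real.sqrt 2 ^ 2 = 2 := Real.sq_sqrt (by norm_num)
  have hs6 : Real.sqrt 6 ^ 2 = 6 := Real.sq_sqrt (by norm_num)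
  have h6pos : (0:ℝ) < Real.sqrt 6 := Real.sqrt_pos.2 (by norm_num)
  have h3pos : (0:ℝ) < Real.sqrt 3 := Real.sqrt_pos.2 (by norm_num)
  field_simp
  linear_combination 2*Real.sqrt 3*hp
    - Real.sqrt 3*Real.sqrt (3-Real.sqrt 3)^2*hs2 - 2*Real.sqrt 3*hq + 4*hs3 - 2*hs6

lemma f1C : ((Real.sqrt (3 + Real.sqrt 3) : ℂ) / (Real.sqrt 6 : ℂ)) ^ 2
    + 2 * ((Real.sqrt 2 : ℂ) * (Real.sqrt (3 - Real.sqrt 3) : ℂ) / (2 * (Real.sqrt 6 : ℂ))) ^ 2 = 1 := by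
  have := f1R; push_cast [← this]; norm_cast
lemma f2C : 2 * ((Real.sqrt (3 + Real.sqrt 3) : ℂ) / (Real.sqrt 6 : ℂ))
    * ((Real.sqrt 2 : ℂ) * (Real.sqrt (3 - Real.sqrt 3) : ℂ) / (2 * (Real.sqrt 6 : ℂ)))
    = ((Real.sqrt 3 : ℝ)⁻¹ : ℂ) := by
  have := f2R; push_cast [← this]; norm_cast
lemma f3C : ((Real.sqrt (3 + Real.sqrt 3) : ℂ) / (Real.sqrt 6 : ℂ)) ^ 2
    - 2 * ((Real.sqrt 2 : ℂ) * (Real.sqrt (3 - Real.sqrt 3) : ℂ) / (2 * (Real.sqrt 6 : ℂ))) ^ 2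
    = ((Real.sqrt 3 : ℝ)⁻¹ : ℂ) := by
  have := f3R; push_cast [← this]; norm_cast

lemma tetra_pp0 : tetra 1 1 0 = ψpp 0 := by simp [tetra, tetraM, Matrix.one_mulVec]
lemma tetra_pp1 : tetra 1 1 1 = ψpp 1 := by simp [tetra, tetraM, Matrix.one_mulVec]
lemma tetra_pm0 : tetra 1 (-1) 0 = ψpp 1 := by
  norm_num [tetra, tetraM, σX, Matrix.mulVec, dotProduct, Fin.sum_univ_two]
lemma tetra_pm1 : tetra 1 (-1) 1 = ψpp 0 := by
  norm_num [tetra, tetraM, σX, Matrix.mulVec, dotProduct, Fin.sum_univ_two]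
lemma tetra_mp0 : tetra (-1) 1 0 = ψpp 0 := by
  norm_num [tetra, tetraM, σZ, Matrix.mulVec, dotProduct, Fin.sum_univ_two]
lemma tetra_mp1 : tetra (-1) 1 1 = -ψpp 1 := by
  norm_num [tetra, tetraM, σZ, Matrix.mulVec, dotProduct, Fin.sum_univ_two]
lemma tetra_mm0 : tetra (-1) (-1) 0 = -I * ψpp 1 := by
  norm_num [tetra, tetraM, σY, Matrix.mulVec, dotProduct, Fin.sum_univ_two]
lemma tetra_mm1 : tetra (-1) (-1) 1 = I * ψpp 0 := by
  norm_num [tetra, tetraM, σY, Matrix.mulVec, dotProduct, Fin.sum_univ_two]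

lemma I2 : (I:ℂ)^2 = -1 := Complex.I_sq
lemma I3 : (I:ℂ)^3 = -I := by rw [pow_succ, I2]; ring
lemma I4 : (I:ℂ)^4 = 1 := by rw [pow_succ, I3]; simp [Complex.I_mul_I]
lemma I5 : (I:ℂ)^5 = I := by rw [pow_succ, I4]; ring
lemma I6 : (I:ℂ)^6 = -1 := by rw [pow_succ, I5, Complex.I_mul_I]

set_option maxHeartbeats 2000000 in
lemma key (a b : ℝ) (ha : a = 1 ∨ a = -1) (hb : b = 1 ∨ b = -1) (k : Fin 4) :
    expVal1 (pauli k) (tetra a b)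
      = (((if k = 0 then 1 else (Real.sqrt 3)⁻¹) * ![(1:ℝ), a, a*b, b] k : ℝ) : ℂ) := by
  have F1 := f1C; have F2 := f2C; have F3 := f3C
  rcases ha with rfl | rfl <;> rcases hb with rfl | rfl <;> fin_cases k <;>
    norm_num [expVal1, pauli, σX, σY, σZ, Fin.sum_univ_two, Matrix.one_apply,
      tetra_pp0, tetra_pp1, tetra_pm0, tetra_pm1, tetra_mp0, tetra_mp1, tetra_mm0, tetra_mm1,
      psi0, psi1, map_ofNat, Complex.conj_I] <;>
    push_cast at F1 F2 F3 ⊢ <;>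
    ring_nf <;>
    try simp only [I2, I3, I4, I5, I6]
  all_goals first
      | linear_combination F2
      | linear_combination -F2
      | linear_combination I*F2
      | linear_combination -(I*F2)
      | linear_combination (1+I)*F2
      | linear_combination (1-I)*F2
      | linear_combination -((1+I)*F2)
      | linear_combination -((1-I)*F2)
      | linear_combination F1
      | linear_combination F1 + F2
      | linear_combination F1 + -F2
      | linear_combination F1 + I*F2
      | linear_combination F1 + -(I*F2)
      | linear_combination F1 + (1+I)*F2
      | linear_combination F1 + (1-I)*F2
      | linear_combination F1 + -((1+I)*F2)
      | linear_combination F1 + -((1-I)*F2)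
      | linear_combination F3
      | linear_combination F3 + F2
      | linear_combination F3 + -F2
      | linear_combination F3 + I*F2
      | linear_combination F3 + -(I*F2)
      | linear_combination F3 + (1+I)*F2
      | linear_combination F3 + (1-I)*F2
      | linear_combination F3 + -((1+I)*F2)
      | linear_combination F3 + -((1-I)*F2)
      | linear_combination -F3
      | linear_combination -F3 + F2
      | linear_combination -F3 + -F2
      | linear_combination -F3 + I*F2
      | linear_combination -F3 + -(I*F2)
      | linear_combination -F3 + (1+I)*F2
      | linear_combination -F3 + (1-I)*F2
      | linear_combination -F3 + -((1+I)*F2)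
      | linear_combination -F3 + -((1-I)*F2)
      | linear_combination F1+F3
      | linear_combination F1+F3 + F2
      | linear_combination F1+F3 + -F2
      | linear_combination F1+F3 + I*F2
      | linear_combination F1+F3 + -(I*F2)
      | linear_combination F1+F3 + (1+I)*F2
      | linear_combination F1+F3 + (1-I)*F2
      | linear_combination F1+F3 + -((1+I)*F2)
      | linear_combination F1+F3 + -((1-I)*F2)
      | linear_combination F1-F3
      | linear_combination F1-F3 + F2
      | linear_combination F1-F3 + -F2
      | linear_combination F1-F3 + I*F2
      | linear_combination F1-F3 + -(I*F2)
      | linear_combination F1-F3 + (1+I)*F2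
      | linear_combination F1-F3 + (1-I)*F2
      | linear_combination F1-F3 + -((1+I)*F2)
      | linear_combination F1-F3 + -((1-I)*F2)

lemma expValN_pauliString {n : ℕ} (s : Fin n → Fin 4) (ψ : Fin n → Fin 2 → ℂ) :
    expValN (pauliString s) (prodState ψ) = ∏ i, expVal1 (pauli (s i)) (ψ i) := by
  symm
  simp only [expVal1]
  rw [Finset.prod_univ_sum, Fintype.piFinset_univ]
  refine Finset.sum_congr rfl fun v _ => ?_
  rw [Finset.prod_univ_sum, Fintype.piFinset_univ]
  refine Finset.sum_congr rfl fun w _ => ?_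
  simp only [expValN, pauliString, prodState, map_prod]
  rw [← Finset.prod_mul_distrib, ← Finset.prod_mul_distrib]

lemma sum_comm3 {ι κ μ : Type*} [Fintype ι] [Fintype κ] [Fintype μ] {M : Type*} [AddCommMonoid M]
    (f : ι → κ → μ → M) : ∑ a, ∑ b, ∑ c, f a b c = ∑ c, ∑ a, ∑ b, f a b c :=
  (Finset.sum_congr rfl fun a _ => Finset.sum_comm).trans Finset.sum_comm

lemma expValN_hamOf {n : ℕ} (Hhat : (Fin n → Fin 4) → ℝ) (Ψ : (Fin n → Fin 2) → ℂ) :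
    expValN (hamOf Hhat) Ψ = ∑ s : Fin n → Fin 4, (Hhat s : ℂ) * expValN (pauliString s) Ψ := by
  calc expValN (hamOf Hhat) Ψ
      = ∑ v, ∑ w, ∑ s : Fin n → Fin 4,
          (starRingEnd ℂ) (Ψ v) * ((Hhat s : ℂ) * pauliString s v w) * Ψ w := by
        simp only [expValN, hamOf, Matrix.sum_apply, Matrix.smul_apply, smul_eq_mul,
          Finset.sum_mul, Finset.mul_sum]
    _ = ∑ s : Fin n → Fin 4, ∑ v, ∑ w,
          (starRingEnd ℂ) (Ψ v) * ((Hhat s : ℂ) * pauliString s v w) * Ψ w :=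
        sum_comm3 _
    _ = ∑ s : Fin n → Fin 4, (Hhat s : ℂ) * expValN (pauliString s) Ψ := by
        refine Finset.sum_congr rfl fun s _ => ?_
        simp only [expValN, Finset.mul_sum]
        refine Finset.sum_congr rfl fun v _ => Finset.sum_congr rfl fun w _ => by ring

theorem stmt_14 (n : ℕ) (Hhat : (Fin n → Fin 4) → ℝ)
    (x : Fin n → Fin 2 → ℝ) (hx : ∀ i b, x i b = 1 ∨ x i b = -1) :
    expValN (hamOf Hhat) (prodState (fun i => tetra (x i 0) (x i 1)))
      = ((∑ s : Fin n → Fin 4, Hhat s * ((Real.sqrt 3)⁻¹) ^ weight s *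
          ∏ i, ![(1 : ℝ), x i 0, x i 0 * x i 1, x i 1] (s i) : ℝ) : ℂ) := by
  rw [expValN_hamOf]
  have realident : ∀ s : Fin n → Fin 4,
      (∏ i, (if s i = 0 then (1:ℝ) else (Real.sqrt 3)⁻¹) * ![(1:ℝ), x i 0, x i 0 * x i 1, x i 1] (s i))
        = ((Real.sqrt 3)⁻¹) ^ weight s * ∏ i, ![(1:ℝ), x i 0, x i 0 * x i 1, x i 1] (s i) := by
    intro s
    rw [Finset.prod_mul_distrib]
    congr 1
    rw [weight, ← Finset.prod_filter_mul_prod_filter_not Finset.univ (fun i => s i ≠ 0)]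
    have h1 : ∏ i ∈ Finset.univ.filter (fun i => s i ≠ 0), (if s i = 0 then (1:ℝ) else (Real.sqrt 3)⁻¹)
        = ((Real.sqrt 3)⁻¹) ^ (Finset.univ.filter (fun i => s i ≠ 0)).card := by
      rw [Finset.prod_congr rfl (fun i hi => if_neg (Finset.mem_filter.1 hi).2), Finset.prod_const]
    have h2 : ∏ i ∈ Finset.univ.filter (fun i => ¬ s i ≠ 0), (if s i = 0 then (1:ℝ) else (Real.sqrt 3)⁻¹)
        = 1 := by
      refine Finset.prod_eq_one fun i hi => if_pos (not_not.1 (Finset.mem_filter.1 hi).2)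
    rw [h1, h2, mul_one]
  have hkey : ∀ s : Fin n → Fin 4,
      expValN (pauliString s) (prodState (fun i => tetra (x i 0) (x i 1)))
        = ((∏ i, (if s i = 0 then (1:ℝ) else (Real.sqrt 3)⁻¹) * ![(1:ℝ), x i 0, x i 0 * x i 1, x i 1] (s i) : ℝ) : ℂ) := by
    intro s
    rw [expValN_pauliString]
    rw [Complex.ofReal_prod]
    exact Finset.prod_congr rfl fun i _ => key _ _ (hx i 0) (hx i 1) (s i)
  calc ∑ s : Fin n → Fin 4, (Hhat s : ℂ) * expValN (pauliString s) (prodState (fun i => tetra (x i 0) (x i 1)))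
      = ∑ s : Fin n → Fin 4, ((Hhat s * ((Real.sqrt 3)⁻¹) ^ weight s *
          ∏ i, ![(1 : ℝ), x i 0, x i 0 * x i 1, x i 1] (s i) : ℝ) : ℂ) := by
        refine Finset.sum_congr rfl fun s _ => ?_
        rw [hkey s, ← Complex.ofReal_mul]
        norm_cast
        rw [realident s]; ring
    _ = _ := by rw [Complex.ofReal_sum]
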